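/- arXiv:1710.03085 — 3 statements merged into one kernel-verified Lean document; each statement's English description precedes it below -/
import Mathlib

section
/- Let Γ act isometrically on a compact metric space M, let F ⊆ Γ be a finite normal subgroup, set Γ' = Γ/F and M' = M/F (with quotient metric). Then for every t > 0 the natural quotient map π : (M, d_t^Γ) → (M', d_t^{Γ'}) is a (1, B)-quasi-isometry, where B is the maximal word length in Γ of an element of F. -/
/-- Word norm of `g` with respect to a generating set `S`. -/
noncomputable def wordNorm {G : Type*} [Group G] (S : Set G) (g : G) : ℕ :=
  sInf {n | ∃ l : List G, l.length = n ∧ (∀ x ∈ l, x ∈ S) ∧ l.prod = g}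

/-- The warped distance at time `t` for the action of `G` on `M`:
`d_t^Γ(x,y) = inf_{γ ∈ Γ} (t · d_M(x, γ·y) + ‖γ‖_Γ)`. -/
noncomputable def warpedDist {G M : Type*} [Group G] [MetricSpace M] [MulAction G M]
    (S : Set G) (t : ℝ) (x y : M) : ℝ :=
  ⨅ γ : G, (t * dist x (γ • y) + (wordNorm S γ : ℝ))

/-- The warped distance at time `t` for the quotient action of `Γ' = Γ/F` on `M' = M/F`,
pulled back to `M`:  here the quotient metric on `M/F` is
`d_{M/F}(πx, πy) = inf_{f ∈ F} d_M(x, f·y)`, and word lengths in `Γ/F` are taken with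
respect to the image of `S`. -/
noncomputable def warpedDistQuot {G M : Type*} [Group G] [MetricSpace M] [MulAction G M]
    (S : Set G) (F : Subgroup G) [F.Normal] (t : ℝ) (x y : M) : ℝ :=
  ⨅ γ : G, (t * (⨅ f : F, dist x ((f : G) • (γ • y))) +
    (wordNorm ((QuotientGroup.mk : G → G ⧸ F) '' S) (QuotientGroup.mk γ) : ℝ))

section helpers
variable {G : Type*} [Group G]

lemma exists_word {S : Set G} (hsymm : ∀ g ∈ S, g⁻¹ ∈ S)
    (hgen : Subgroup.closure S = ⊤) (γ : G) :
    ∃ l : List G, (∀ x ∈ l, x ∈ S) ∧ l.prod = γ := by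
  have hγ : γ ∈ Submonoid.closure (S ∪ S⁻¹) := by
    have h : γ ∈ (Subgroup.closure S).toSubmonoid := by rw [hgen]; trivial
    rwa [Subgroup.closure_toSubmonoid] at h
  obtain ⟨l, hl, hprod⟩ := Submonoid.exists_list_of_mem_closure hγ
  refine ⟨l, fun x hx => ?_, hprod⟩
  rcases hl x hx with h | h
  · exact h
  · rw [Set.mem_inv] at h; simpa using hsymm _ h

lemma wordNorm_le_list {S : Set G} {γ : G} (l : List G)
    (h1 : ∀ x ∈ l, x ∈ S) (h2 : l.prod = γ) : wordNorm S γ ≤ l.length :=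
  Nat.sInf_le ⟨l, rfl, h1, h2⟩

lemma wordNorm_spec {S : Set G} {γ : G}
    (h : ∃ l : List G, (∀ x ∈ l, x ∈ S) ∧ l.prod = γ) :
    ∃ l : List G, l.length = wordNorm S γ ∧ (∀ x ∈ l, x ∈ S) ∧ l.prod = γ := by
  obtain ⟨l, h1, h2⟩ := h
  exact Nat.sInf_mem (⟨l.length, l, rfl, h1, h2⟩ :
    Set.Nonempty {n | ∃ l : List G, l.length = n ∧ (∀ x ∈ l, x ∈ S) ∧ l.prod = γ})

lemma wordNorm_one {S : Set G} : wordNorm S 1 = 0 :=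
  Nat.le_zero.mp (wordNorm_le_list [] (by simp) (by simp))

lemma exists_lift_list {F : Subgroup G} {S : Set G} :
    ∀ l' : List (G ⧸ F), (∀ x ∈ l', x ∈ (QuotientGroup.mk : G → G ⧸ F) '' S) →
      ∃ l : List G, (∀ x ∈ l, x ∈ S) ∧ l.map (QuotientGroup.mk : G → G ⧸ F) = l'
  | [], _ => ⟨[], by simp, by simp⟩
  | (a :: l'), h => by
      obtain ⟨s, hs, hsa⟩ := h a (by simp)
      obtain ⟨l, hl1, hl2⟩ := exists_lift_list l' (fun x hx => h x (by simp [hx]))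
      refine ⟨s :: l, ?_, by simp [hsa, hl2]⟩
      intro x hx
      rcases List.mem_cons.mp hx with rfl | hx
      exacts [hs, hl1 x hx]

lemma mk_list_prod {F : Subgroup G} [F.Normal] (l : List G) :
    (QuotientGroup.mk l.prod : G ⧸ F) = (l.map (QuotientGroup.mk : G → G ⧸ F)).prod := by
  induction l with
  | nil => simp
  | cons a l ih => rw [List.prod_cons, List.map_cons, List.prod_cons, QuotientGroup.mk_mul, ih]

end helpers

lemma Real.iInf_equiv {ι ι' : Sort*} (e : ι ≃ ι') (g : ι' → ℝ) :
    ⨅ i, g (e i) = ⨅ i, g i := by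
  rw [iInf, iInf]
  congr 1
  exact e.surjective.range_comp g

/-- For a finite normal subgroup `F ⊆ Γ`, the natural quotient map
`(M, d_t^Γ) → (M/F, d_t^{Γ/F})` is a `(1, B)`-quasi-isometry, where `B` is the maximal
word length in `Γ` of an element of `F`.  The quotient distance is expressed on `M`
itself via `warpedDistQuot` (which descends to `M/F`, as recorded in the first two
conclusions), and the quotient map is surjective, giving the `C`-density condition. -/
theorem quotient_map_quasiIsometry {G M : Type*} [Group G] [MetricSpace M] [CompactSpace M]
    [MulAction G M]
    (S : Set G) (hSfin : S.Finite) (hsymm : ∀ g ∈ S, g⁻¹ ∈ S)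
    (hgen : Subgroup.closure S = ⊤)
    (hiso : ∀ γ : G, Isometry (fun x : M => γ • x))
    (F : Subgroup G) [F.Normal] (hF : (F : Set G).Finite)
    (t : ℝ) (ht : 0 < t)
    (B : ℕ) (hB : IsGreatest (wordNorm S '' (F : Set G)) B) :
    (∀ (x y : M) (f : F), warpedDistQuot S F t ((f : G) • x) y = warpedDistQuot S F t x y ∧
        warpedDistQuot S F t x ((f : G) • y) = warpedDistQuot S F t x y) ∧
    (∀ x y : M,
        warpedDist S t x y - (B : ℝ) ≤ warpedDistQuot S F t x y ∧
        warpedDistQuot S F t x y ≤ warpedDist S t x y + (B : ℝ)) ∧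
    (∀ y : M, ∃ x : M, warpedDistQuot S F t x y ≤ (B : ℝ)) := by
  classical
  haveI : Finite F := hF.to_subtype
  haveI : Nonempty F := ⟨1⟩
  have hsymm' : ∀ g ∈ (QuotientGroup.mk : G → G ⧸ F) '' S, g⁻¹ ∈ (QuotientGroup.mk : G → G ⧸ F) '' S := by
    rintro g ⟨s, hs, rfl⟩
    exact ⟨s⁻¹, hsymm s hs, by simp⟩
  have hgen' : Subgroup.closure ((QuotientGroup.mk : G → G ⧸ F) '' S) = ⊤ := by
    have h1 : (Subgroup.closure S).map (QuotientGroup.mk' F)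
        = Subgroup.closure ((QuotientGroup.mk' F) '' S) := MonoidHom.map_closure _ _
    rw [hgen, Subgroup.map_top_of_surjective _ (QuotientGroup.mk'_surjective F)] at h1
    exact h1.symm
  have hword : ∀ γ : G, ∃ l : List G, l.length = wordNorm S γ ∧ (∀ x ∈ l, x ∈ S) ∧ l.prod = γ :=
    fun γ => wordNorm_spec (exists_word hsymm hgen γ)
  have hword' : ∀ q : G ⧸ F, ∃ l : List (G ⧸ F),
      l.length = wordNorm ((QuotientGroup.mk : G → G ⧸ F) '' S) q ∧
      (∀ x ∈ l, x ∈ (QuotientGroup.mk : G → G ⧸ F) '' S) ∧ l.prod = q :=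
    fun q => wordNorm_spec (exists_word hsymm' hgen' q)
  have hBle : ∀ g ∈ F, wordNorm S g ≤ B := fun g hg => hB.2 ⟨g, hg, rfl⟩
  have hquot_le : ∀ γ : G,
      wordNorm ((QuotientGroup.mk : G → G ⧸ F) '' S) (QuotientGroup.mk γ) ≤ wordNorm S γ := by
    intro γ
    obtain ⟨l, hl, hmem, hprod⟩ := hword γ
    have h := wordNorm_le_list (l.map (QuotientGroup.mk : G → G ⧸ F))
      (fun x hx => by
        obtain ⟨a, ha, rfl⟩ := List.mem_map.mp hx
        exact Set.mem_image_of_mem _ (hmem a ha))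
      (by rw [← mk_list_prod, hprod])
    rwa [List.length_map, hl] at h
  -- key norm bound
  have hkey : ∀ (f γ : G), f ∈ F → (wordNorm S (f * γ) : ℝ) ≤
      (B : ℝ) + (wordNorm ((QuotientGroup.mk : G → G ⧸ F) '' S) (QuotientGroup.mk γ) : ℝ) := by
    intro f γ hf
    obtain ⟨l', hl'len, hl'mem, hl'prod⟩ := hword' (QuotientGroup.mk γ)
    obtain ⟨l, hlmem, hlmap⟩ := exists_lift_list l' hl'mem
    have hmkp : (QuotientGroup.mk l.prod : G ⧸ F) = QuotientGroup.mk γ := by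
      rw [mk_list_prod, hlmap, hl'prod]
    have hf0 : l.prod⁻¹ * γ ∈ F := (QuotientGroup.eq).mp hmkp
    have hc : l.prod * (l.prod⁻¹ * γ) * l.prod⁻¹ ∈ F :=
      Subgroup.Normal.conj_mem ‹F.Normal› _ hf0 l.prod
    have hg : f * (l.prod * (l.prod⁻¹ * γ) * l.prod⁻¹) ∈ F := F.mul_mem hf hc
    obtain ⟨lg, hlglen, hlgmem, hlgprod⟩ := hword (f * (l.prod * (l.prod⁻¹ * γ) * l.prod⁻¹))
    have hle : wordNorm S (f * γ) ≤ (lg ++ l).length := by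
      apply wordNorm_le_list
      · intro x hx; rcases List.mem_append.mp hx with h | h
        exacts [hlgmem x h, hlmem x h]
      · rw [List.prod_append, hlgprod]; group
    have hlen : l.length = wordNorm ((QuotientGroup.mk : G → G ⧸ F) '' S) (QuotientGroup.mk γ) := by
      rw [← hl'len, ← hlmap, List.length_map]
    have h2 : wordNorm S (f * γ) ≤
        B + wordNorm ((QuotientGroup.mk : G → G ⧸ F) '' S) (QuotientGroup.mk γ) := by
      calc wordNorm S (f * γ) ≤ (lg ++ l).length := hle
        _ = lg.length + l.length := List.length_append
        _ ≤ B + wordNorm ((QuotientGroup.mk : G → G ⧸ F) '' S) (QuotientGroup.mk γ) := by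
            rw [hlglen, hlen]; exact Nat.add_le_add_right (hBle _ hg) _
    exact_mod_cast h2
  -- boundedness facts
  have hinner_bdd : ∀ (x z : M), BddBelow (Set.range fun f : F => dist x ((f : G) • z)) :=
    fun x z => ⟨0, by rintro r ⟨f, rfl⟩; exact dist_nonneg⟩
  have hinner_nonneg : ∀ (x z : M), 0 ≤ ⨅ f : F, dist x ((f : G) • z) :=
    fun x z => le_ciInf fun f => dist_nonneg
  have hQ_bdd : ∀ x y : M, BddBelow (Set.range fun γ : G =>
      t * (⨅ f : F, dist x ((f : G) • (γ • y))) +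
      (wordNorm ((QuotientGroup.mk : G → G ⧸ F) '' S) (QuotientGroup.mk γ) : ℝ)) := by
    intro x y
    refine ⟨0, ?_⟩
    rintro r ⟨γ, rfl⟩
    exact add_nonneg (mul_nonneg ht.le (hinner_nonneg x (γ • y))) (Nat.cast_nonneg _)
  have hW_bdd : ∀ x y : M, BddBelow (Set.range fun γ : G =>
      t * dist x (γ • y) + (wordNorm S γ : ℝ)) := by
    intro x y
    refine ⟨0, ?_⟩
    rintro r ⟨γ, rfl⟩
    exact add_nonneg (mul_nonneg ht.le dist_nonneg) (Nat.cast_nonneg _)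
  refine ⟨?_, ?_, ?_⟩
  · -- invariance
    intro x y f
    constructor
    · unfold warpedDistQuot
      refine congrArg _ (funext fun γ => ?_)
      have hinner_eq : (⨅ f' : F, dist ((f : G) • x) ((f' : G) • (γ • y)))
          = ⨅ f' : F, dist x ((f' : G) • (γ • y)) := by
        rw [← Real.iInf_equiv (Equiv.mulLeft f) (fun f' : F => dist ((f : G) • x) ((f' : G) • (γ • y)))]
        refine congrArg _ (funext fun f'' => ?_)
        show dist ((f : G) • x) (((f * f'' : F) : G) • (γ • y)) = dist x ((f'' : G) • (γ • y))
        rw [Subgroup.coe_mul, mul_smul]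
        simpa using (hiso (f : G)).dist_eq x ((f'' : G) • (γ • y))
      rw [hinner_eq]
    · unfold warpedDistQuot
      refine congrArg _ (funext fun γ => ?_)
      have hc : γ * (f : G) * γ⁻¹ ∈ F := Subgroup.Normal.conj_mem ‹F.Normal› _ f.2 γ
      have hinner_eq : (⨅ f' : F, dist x ((f' : G) • (γ • ((f : G) • y))))
          = ⨅ f' : F, dist x ((f' : G) • (γ • y)) := by
        rw [← Real.iInf_equiv (Equiv.mulRight (⟨γ * (f : G) * γ⁻¹, hc⟩ : F))
          (fun f' : F => dist x ((f' : G) • (γ • y)))]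
        refine congrArg _ (funext fun f' => ?_)
        show dist x ((f' : G) • (γ • ((f : G) • y)))
          = dist x (((f' * ⟨γ * (f : G) * γ⁻¹, hc⟩ : F) : G) • (γ • y))
        congr 1
        rw [Subgroup.coe_mul, smul_smul, smul_smul, smul_smul]
        show _ = ((f' : G) * (γ * (f : G) * γ⁻¹) * γ) • y
        congr 1
        group
      rw [hinner_eq]
  · -- distance comparison
    intro x y
    constructor
    · -- lower bound
      show warpedDist S t x y - (B : ℝ) ≤ warpedDistQuot S F t x y
      unfold warpedDistQuot
      refine le_ciInf fun γ => ?_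
      obtain ⟨f₀, hf₀⟩ := Finite.exists_min (fun f : F => dist x ((f : G) • (γ • y)))
      have hinf : (⨅ f : F, dist x ((f : G) • (γ • y))) = dist x ((f₀ : G) • (γ • y)) :=
        le_antisymm (ciInf_le (hinner_bdd x _) f₀) (le_ciInf hf₀)
      have h1 : warpedDist S t x y ≤
          t * dist x (((f₀ : G) * γ) • y) + (wordNorm S ((f₀ : G) * γ) : ℝ) :=
        ciInf_le (hW_bdd x y) ((f₀ : G) * γ)
      rw [mul_smul] at h1
      have h2 := hkey (f₀ : G) γ f₀.2
      rw [hinf]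
      linarith
    · -- upper bound
      have hupper : warpedDistQuot S F t x y ≤ warpedDist S t x y := by
        unfold warpedDistQuot warpedDist
        refine ciInf_mono (hQ_bdd x y) fun γ => ?_
        have h1 : (⨅ f : F, dist x ((f : G) • (γ • y))) ≤ dist x (γ • y) := by
          have h := ciInf_le (hinner_bdd x (γ • y)) (1 : F)
          simpa using h
        have h2 : (wordNorm ((QuotientGroup.mk : G → G ⧸ F) '' S) (QuotientGroup.mk γ) : ℝ)
            ≤ (wordNorm S γ : ℝ) := by exact_mod_cast hquot_le γ
        have h3 := mul_le_mul_of_nonneg_left h1 ht.le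
        linarith
      have : (0 : ℝ) ≤ B := Nat.cast_nonneg _
      linarith
  · -- density / surjectivity
    intro y
    refine ⟨y, ?_⟩
    have h1 : warpedDistQuot S F t y y ≤
        t * (⨅ f : F, dist y ((f : G) • ((1 : G) • y))) +
        (wordNorm ((QuotientGroup.mk : G → G ⧸ F) '' S) (QuotientGroup.mk (1 : G)) : ℝ) := by
      unfold warpedDistQuot
      exact ciInf_le (hQ_bdd y y) 1
    have hinf : (⨅ f : F, dist y ((f : G) • ((1 : G) • y))) = 0 := by
      refine le_antisymm ?_ (hinner_nonneg y _)
      have h := ciInf_le (hinner_bdd y ((1 : G) • y)) (1 : F)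
      simpa using h
    have hn : wordNorm ((QuotientGroup.mk : G → G ⧸ F) '' S) (QuotientGroup.mk (1 : G)) = 0 := by
      have h : (QuotientGroup.mk (1 : G) : G ⧸ F) = 1 := by simp
      rw [h]; exact wordNorm_one
    rw [hinf, hn] at h1
    simp only [mul_zero, Nat.cast_zero, add_zero] at h1
    exact h1.trans (Nat.cast_nonneg _)
end

section
/- Let X be a δ-hyperbolic geodesic metric space, let s be an isometry of X, and let x, y ∈ X with d(x, sx) < C and d(y, sy) < d for constants d, C > δ. Then there is a point z on a geodesic segment [x, y] satisfying d(z, sz) < 10C and d(y, z) < 10d. -/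
open Set

/-- `f` parametrizes a geodesic segment from `a` to `b` (by arclength on
`[0, dist a b]`). -/
def IsGeodesicSegment {X : Type*} [MetricSpace X] (f : ℝ → X) (a b : X) : Prop :=
  f 0 = a ∧ f (dist a b) = b ∧
    ∀ u ∈ Icc (0 : ℝ) (dist a b), ∀ v ∈ Icc (0 : ℝ) (dist a b),
      dist (f u) (f v) = |u - v|

/-- `X` is a geodesic space: any two points are joined by a geodesic segment. -/
def GeodesicSpace (X : Type*) [MetricSpace X] : Prop :=
  ∀ a b : X, ∃ f : ℝ → X, IsGeodesicSegment f a b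

/-- `X` is `δ`-hyperbolic: geodesic triangles are `δ`-thin, i.e. every point of one
side is within `δ` of the union of the other two sides. -/
def ThinTriangles {X : Type*} [MetricSpace X] (δ : ℝ) : Prop :=
  ∀ (a b c : X) (f g h : ℝ → X),
    IsGeodesicSegment f a b → IsGeodesicSegment g b c → IsGeodesicSegment h a c →
    ∀ u ∈ Icc (0 : ℝ) (dist a c),
      ∃ p, (p ∈ f '' Icc (0 : ℝ) (dist a b) ∨ p ∈ g '' Icc (0 : ℝ) (dist b c)) ∧
        dist (h u) p ≤ δ

/-- Let `X` be a `δ`-hyperbolic geodesic metric space, `s` an isometry of `X`, and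
`x, y ∈ X` with `d(x, sx) < C` and `d(y, sy) < d`, where `d, C > δ`.  Then there is a
point `z` on a geodesic segment `[x, y]` satisfying `d(z, sz) < 10C` and
`d(y, z) < 10d`. -/
theorem exists_point_small_displacement_on_geodesic {X : Type*} [MetricSpace X]
    (δ : ℝ) (hgeo : GeodesicSpace X) (hδ : ThinTriangles (X := X) δ)
    (s : X → X) (hs : Isometry s)
    (x y : X) (C d : ℝ) (hC : δ < C) (hd : δ < d)
    (hx : dist x (s x) < C) (hy : dist y (s y) < d)
    (seg : ℝ → X) (hseg : IsGeodesicSegment seg x y) :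
    ∃ u ∈ Icc (0 : ℝ) (dist x y),
      dist (seg u) (s (seg u)) < 10 * C ∧ dist y (seg u) < 10 * d := by
  obtain ⟨hseg0, hsegL, hsegd⟩ := hseg
  set L := dist x y with hL
  have hC0 : 0 < C := lt_of_le_of_lt dist_nonneg hx
  have hd0 : 0 < d := lt_of_le_of_lt dist_nonneg hy
  have hL0 : (0:ℝ) ≤ L := dist_nonneg
  -- δ is nonnegative, else thin triangles on a degenerate triangle give a contradiction
  rcases lt_or_ge δ 0 with hδ0 | hδ0
  · exfalso
    obtain ⟨f, hf⟩ := hgeo x x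
    obtain ⟨p, _, hp⟩ := hδ x x x f f f hf hf hf 0 (by simp)
    exact absurd (dist_nonneg.trans hp) (not_le.2 hδ0)
  by_cases hdC : d ≤ 10 * C
  · -- take z = y
    refine ⟨L, ⟨hL0, le_refl _⟩, ?_, ?_⟩
    · rw [hsegL]; exact lt_of_lt_of_le hy hdC
    · rw [hsegL]; simpa using (by positivity : (0:ℝ) < 10 * d)
  push_neg at hdC
  by_cases hLbig : L ≤ C + d + 3 * δ
  · -- take z = x
    refine ⟨0, ⟨le_refl _, hL0⟩, ?_, ?_⟩
    · rw [hseg0]; linarith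
    · rw [hseg0, dist_comm]; linarith
  push_neg at hLbig
  -- choose the parameter
  set B : ℝ := min (10 * d) (L - C - 2 * δ) with hB
  have hAB : d + δ < B := lt_min (by linarith) (by linarith)
  set t : ℝ := ((d + δ) + B) / 2 with ht
  have htA : d + δ < t := by simp only [ht]; linarith
  have htB : t < B := by simp only [ht]; linarith
  have htB1 : t < 10 * d := lt_of_lt_of_le htB (min_le_left _ _)
  have htB2 : t < L - C - 2 * δ := lt_of_lt_of_le htB (min_le_right _ _)
  set u : ℝ := L - t with hu
  have hut : C + 2 * δ < u := by simp only [hu]; linarith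
  have hu0 : (0:ℝ) ≤ u := by linarith
  have huL : u ≤ L := by simp only [hu]; linarith
  have huI : u ∈ Icc (0:ℝ) L := ⟨hu0, huL⟩
  have hLI : L ∈ Icc (0:ℝ) L := ⟨hL0, le_refl _⟩
  have h0I : (0:ℝ) ∈ Icc (0:ℝ) L := ⟨le_refl _, hL0⟩
  -- distances along seg
  have hzy : dist (seg u) y = t := by
    rw [← hsegL, hsegd u huI L hLI]
    rw [abs_of_nonpos (by linarith)]; simp only [hu]; ring
  have hzx : dist (seg u) x = u := by
    rw [← hseg0, hsegd u huI 0 h0I]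
    rw [abs_of_nonneg (by linarith)]; ring
  -- auxiliary geodesics
  obtain ⟨g1, hg1⟩ := hgeo x (s y)
  obtain ⟨g2, hg2⟩ := hgeo (s y) y
  obtain ⟨f2, hf2⟩ := hgeo x (s x)
  have hsxy : dist (s x) (s y) = L := hs.dist_eq x y
  -- s ∘ seg is a geodesic from s x to s y
  have hg' : IsGeodesicSegment (fun w => s (seg w)) (s x) (s y) := by
    refine ⟨?_, ?_, ?_⟩
    · show s (seg 0) = s x
      rw [hseg0]
    · show s (seg (dist (s x) (s y))) = s y
      rw [hsxy, hsegL]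
    · intro a ha b hb
      rw [hsxy] at ha hb
      show dist (s (seg a)) (s (seg b)) = |a - b|
      rw [hs.dist_eq, hsegd a ha b hb]
  -- first thin triangle: x, s y, y ; seg u is δ-close to [x, s y] ∪ [s y, y]
  obtain ⟨p, hp, hzp⟩ := hδ x (s y) y g1 g2 seg hg1 hg2 ⟨hseg0, hsegL, hsegd⟩ u huI
  rcases hp with hp | hp
  swap
  · -- p on [s y, y] : impossible since seg u is far from y
    exfalso
    obtain ⟨w, hw, rfl⟩ := hp
    have hDy : dist (s y) y < d := by rw [dist_comm]; exact hy
    have hpy : dist (g2 w) y = dist (s y) y - w := by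
      have h := hg2.2.2 w hw (dist (s y) y) ⟨dist_nonneg, le_refl _⟩
      rw [hg2.2.1] at h
      rw [h, abs_of_nonpos (by linarith [hw.2])]
      ring
    have := dist_triangle (seg u) (g2 w) y
    rw [hzy] at this
    have hwn : 0 ≤ w := hw.1
    linarith [hpy ▸ this]
  obtain ⟨v, hv, rfl⟩ := hp
  -- second thin triangle: x, s x, s y ; g1 v is δ-close to [x, s x] ∪ s[x, y]
  obtain ⟨q, hq, hpq⟩ := hδ x (s x) (s y) f2 (fun w => s (seg w)) g1 hf2 hg' hg1 v hv
  rcases hq with hq | hq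
  · -- q on [x, s x] : impossible since seg u is far from x
    exfalso
    obtain ⟨r, hr, rfl⟩ := hq
    have hxq : dist x (f2 r) = r := by
      rw [← hf2.1, hf2.2.2 0 ⟨le_refl _, dist_nonneg⟩ r hr, abs_of_nonpos (by linarith [hr.1])]
      ring
    have h1 := dist_triangle (seg u) (g1 v) (f2 r)
    have h2 := dist_triangle (seg u) (f2 r) x
    rw [hzx] at h2
    have hrC : r < C := lt_of_le_of_lt hr.2 hx
    rw [dist_comm x (f2 r)] at hxq
    linarith
  -- main case : q = s (seg w)
  obtain ⟨w, hw, rfl⟩ := hq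
  rw [hsxy] at hw
  have hzq : dist (seg u) (s (seg w)) ≤ 2 * δ := by
    have := dist_triangle (seg u) (g1 v) (s (seg w))
    linarith
  have hxw : dist x (seg w) = w := by
    rw [← hseg0, hsegd 0 h0I w hw, abs_of_nonpos (by linarith [hw.1])]; ring
  have hsxw : dist (s x) (s (seg w)) = w := by rw [hs.dist_eq, hxw]
  have h3 : |dist x (s (seg w)) - w| ≤ dist x (s x) := by
    have h := abs_dist_sub_le x (s x) (s (seg w))
    rwa [hsxw] at h
  have h4 : |dist x (s (seg w)) - u| ≤ 2 * δ := by
    calc |dist x (s (seg w)) - u| = |dist (s (seg w)) x - dist (seg u) x| := by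
          rw [hzx, dist_comm]
      _ ≤ dist (s (seg w)) (seg u) := abs_dist_sub_le _ _ _
      _ ≤ 2 * δ := by rw [dist_comm]; exact hzq
  have huw : |u - w| ≤ C + 2 * δ := by
    rw [abs_le] at h3 h4 ⊢
    constructor <;> linarith [h3.1, h3.2, h4.1, h4.2]
  have hwu : dist (s (seg w)) (s (seg u)) ≤ C + 2 * δ := by
    rw [hs.dist_eq, hsegd w hw u huI]
    rwa [abs_sub_comm] at huw
  refine ⟨u, huI, ?_, ?_⟩
  · have := dist_triangle (seg u) (s (seg w)) (s (seg u))
    linarith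
  · rw [dist_comm, hzy]; exact htB1
end

section
/- Let G and K be compact topological groups, H ≤ G and C ≤ K closed subgroups containing no nontrivial closed normal subgroup of G (respectively K). Let Γ ≤ G and Λ ≤ K be dense subgroups, ρ : Γ → Λ an isomorphism, and f : G/H → K/C a continuous map equivariant with respect to ρ (i.e. f(γ·x) = ρ(γ)·f(x) for all γ ∈ Γ). Then there is a continuous surjective homomorphism ρ̂ : G → K extending ρ such that f is ρ̂-equivariant; in particular f is a surjective affine map. -/
private lemma t2_quotient_of_isClosed {K : Type*} [Group K] [TopologicalSpace K]
    [IsTopologicalGroup K] (C : Subgroup K) (hCcl : IsClosed (C : Set K)) :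
    T2Space (K ⧸ C) := by
  rw [t2_iff_isClosed_diagonal]
  have h := (QuotientGroup.isOpenQuotientMap_mk (N := C)).prodMap
    (QuotientGroup.isOpenQuotientMap_mk (N := C))
  rw [← h.isQuotientMap.isClosed_preimage]
  have heq : (Prod.map (QuotientGroup.mk : K → K ⧸ C) QuotientGroup.mk) ⁻¹'
      Set.diagonal (K ⧸ C) = {p : K × K | p.1⁻¹ * p.2 ∈ C} := by
    ext p
    simp [Set.mem_diagonal_iff, Prod.map, QuotientGroup.eq]
  rw [heq]
  exact hCcl.preimage (continuous_fst.inv.mul continuous_snd)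

/-- Let `G` and `K` be compact (Hausdorff) topological groups, `H ≤ G` and `C ≤ K`
closed subgroups containing no nontrivial closed normal subgroup of `G` (resp. `K`),
`Γ ≤ G` and `Λ ≤ K` dense subgroups, `ρ : Γ → Λ` an isomorphism, and
`f : G/H → K/C` a continuous `ρ`-equivariant map.  Then there is a continuous
surjective homomorphism `ρ̂ : G → K` extending `ρ` such that `f` is `ρ̂`-equivariant;
in particular `f` is a surjective affine map. -/
theorem semiconjugacy_is_affine
    {G K : Type*} [Group G] [TopologicalSpace G] [IsTopologicalGroup G] [CompactSpace G]
    [T2Space G] [Group K] [TopologicalSpace K] [IsTopologicalGroup K] [CompactSpace K]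
    [T2Space K]
    (H : Subgroup G) (hHcl : IsClosed (H : Set G))
    (hH : ∀ N : Subgroup G, N.Normal → IsClosed (N : Set G) → N ≤ H → N = ⊥)
    (C : Subgroup K) (hCcl : IsClosed (C : Set K))
    (hC : ∀ N : Subgroup K, N.Normal → IsClosed (N : Set K) → N ≤ C → N = ⊥)
    (Γ : Subgroup G) (hΓ : Dense (Γ : Set G))
    (Λ : Subgroup K) (hΛ : Dense (Λ : Set K))
    (ρ : Γ ≃* Λ)
    (f : G ⧸ H → K ⧸ C) (hf : Continuous f)
    (hequiv : ∀ (γ : Γ) (x : G ⧸ H), f ((γ : G) • x) = ((ρ γ : Λ) : K) • f x) :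
    ∃ ρhat : G →* K, Continuous ρhat ∧ Function.Surjective ρhat ∧
      (∀ γ : Γ, ρhat (γ : G) = ((ρ γ : Λ) : K)) ∧
      (∀ (g : G) (x : G ⧸ H), f (g • x) = ρhat g • f x) ∧
      Function.Surjective f := by
  haveI : T2Space (K ⧸ C) := t2_quotient_of_isClosed C hCcl
  -- the "graph" set
  set Rset : Set (G × K) := {p | ∀ x : G ⧸ H, f (p.1 • x) = p.2 • f x} with hRset
  have hmemiff : ∀ p : G × K, p ∈ Rset ↔ ∀ x : G ⧸ H, f (p.1 • x) = p.2 • f x :=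
    fun p => Iff.rfl
  have hone : ((1 : G), (1 : K)) ∈ Rset := by
    rw [hmemiff]
    intro x; simp
  have hmulmem : ∀ {p q : G × K}, p ∈ Rset → q ∈ Rset →
      (p.1 * q.1, p.2 * q.2) ∈ Rset := by
    intro p q hp hq
    rw [hmemiff] at hp hq ⊢
    intro x
    show f ((p.1 * q.1) • x) = (p.2 * q.2) • f x
    rw [mul_smul, mul_smul, hp, hq]
  have hinvmem : ∀ {p : G × K}, p ∈ Rset → (p.1⁻¹, p.2⁻¹) ∈ Rset := by
    intro p hp
    rw [hmemiff] at hp ⊢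
    intro x
    show f (p.1⁻¹ • x) = p.2⁻¹ • f x
    rw [eq_inv_smul_iff, ← hp, smul_inv_smul]
  have hRcl : IsClosed Rset := by
    have : Rset = ⋂ x : G ⧸ H, {p : G × K | f (p.1 • x) = p.2 • f x} := by
      ext p; simp [hRset, Set.mem_iInter]
    rw [this]
    exact isClosed_iInter fun x => isClosed_eq
      (hf.comp (continuous_fst.smul continuous_const))
      (continuous_snd.smul continuous_const)
  have hΓmem : ∀ γ : Γ, ((γ : G), ((ρ γ : Λ) : K)) ∈ Rset := fun γ x => hequiv γ x
  -- the image of f is invariant under all of K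
  have hScl : IsClosed (Set.range f) := (isCompact_range hf).isClosed
  have hSinv : ∀ (k : K), ∀ y ∈ Set.range f, k • y ∈ Set.range f := by
    have hTcl : IsClosed {k : K | ∀ x : G ⧸ H, k • f x ∈ Set.range f} := by
      have : {k : K | ∀ x : G ⧸ H, k • f x ∈ Set.range f}
          = ⋂ x : G ⧸ H, (fun k : K => k • f x) ⁻¹' Set.range f := by
        ext k; simp [Set.mem_iInter]
      rw [this]
      exact isClosed_iInter fun x => hScl.preimage (continuous_id.smul continuous_const)
    have hΛT : (Λ : Set K) ⊆ {k : K | ∀ x : G ⧸ H, k • f x ∈ Set.range f} := by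
      rintro k hk x
      have h1 : ((ρ (ρ.symm ⟨k, hk⟩) : Λ) : K) = k := by
        rw [ρ.apply_symm_apply]
      exact ⟨((ρ.symm ⟨k, hk⟩ : Γ) : G) • x, by rw [hequiv, h1]⟩
    have : {k : K | ∀ x : G ⧸ H, k • f x ∈ Set.range f} = Set.univ := by
      apply Set.eq_univ_of_univ_subset
      calc (Set.univ : Set K) = closure (Λ : Set K) := hΛ.closure_eq.symm
        _ ⊆ closure {k : K | ∀ x : G ⧸ H, k • f x ∈ Set.range f} := closure_mono hΛT
        _ = _ := hTcl.closure_eq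
    rintro k y ⟨x, rfl⟩
    have hk : k ∈ {k : K | ∀ x : G ⧸ H, k • f x ∈ Set.range f} := this ▸ Set.mem_univ k
    exact hk x
  -- the pointwise stabilizer of the image of f is trivial
  have htriv : ∀ k : K, (∀ x : G ⧸ H, k • f x = f x) → k = 1 := by
    intro k hk
    set L : Subgroup K :=
      { carrier := {k : K | ∀ x : G ⧸ H, k • f x = f x}
        one_mem' := fun x => one_smul _ _
        mul_mem' := by
          intro a b ha hb x
          rw [mul_smul, hb, ha]
        inv_mem' := by
          intro a ha x
          rw [inv_smul_eq_iff]
          exact (ha x).symm } with hL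
    have hLnormal : L.Normal := by
      constructor
      intro n hn g x
      obtain ⟨x', hx'⟩ := hSinv g⁻¹ (f x) ⟨x, rfl⟩
      have : (g * n * g⁻¹) • f x = g • n • g⁻¹ • f x := by
        rw [mul_smul, mul_smul]
      rw [this, ← hx', hn x', hx', smul_inv_smul]
    have hLcl : IsClosed (L : Set K) := by
      have : (L : Set K) = ⋂ x : G ⧸ H, {k : K | k • f x = f x} := by
        ext k; simp [hL, Set.mem_iInter]
      rw [this]
      exact isClosed_iInter fun x => isClosed_eq
        (continuous_id.smul continuous_const) continuous_const
    have hLC : L ≤ C := by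
      intro a ha
      obtain ⟨k₀, hk₀⟩ := QuotientGroup.mk_surjective (f ((1 : G) : G ⧸ H))
      have hconj : k₀ * a * k₀⁻¹ ∈ L := hLnormal.conj_mem a ha k₀
      have hfix : (k₀ * a * k₀⁻¹) • f ((1 : G) : G ⧸ H) = f ((1 : G) : G ⧸ H) :=
        hconj _
      rw [← hk₀] at hfix
      have hsm : (k₀ * a * k₀⁻¹) • (QuotientGroup.mk k₀ : K ⧸ C)
          = QuotientGroup.mk ((k₀ * a * k₀⁻¹) * k₀) :=
        MulAction.Quotient.smul_mk C _ _
      rw [hsm] at hfix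
      have := QuotientGroup.eq.mp hfix.symm
      -- k₀⁻¹ * (k₀ * a * k₀⁻¹ * k₀) ∈ C
      have h2 : k₀⁻¹ * (k₀ * a * k₀⁻¹ * k₀) = a := by group
      rwa [h2] at this
    have hLbot : L = ⊥ := hC L hLnormal hLcl hLC
    have hkL : k ∈ L := hk
    rw [hLbot] at hkL
    exact hkL
  -- uniqueness of the second coordinate
  have huniq : ∀ {g : G} {k k' : K}, (g, k) ∈ Rset → (g, k') ∈ Rset → k = k' := by
    intro g k k' hk hk'
    have h1 : (g⁻¹ * g, k⁻¹ * k') ∈ Rset := hmulmem (hinvmem hk) hk'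
    rw [inv_mul_cancel] at h1
    have h2 : ∀ x : G ⧸ H, (k⁻¹ * k') • f x = f x := by
      intro x
      have := h1 x
      rw [one_smul] at this
      exact this.symm
    have := htriv _ h2
    rw [inv_mul_eq_one] at this
    exact this
  -- existence of the second coordinate, by density
  have hex : ∀ g : G, ∃ k : K, (g, k) ∈ Rset := by
    have hPcl : IsClosed (Prod.fst '' Rset) :=
      (hRcl.isCompact.image continuous_fst).isClosed
    have hsub : (Γ : Set G) ⊆ Prod.fst '' Rset := by
      rintro g hg
      exact ⟨((((⟨g, hg⟩ : Γ) : G)), ((ρ ⟨g, hg⟩ : Λ) : K)), hΓmem ⟨g, hg⟩, rfl⟩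
    have huniv : Prod.fst '' Rset = Set.univ := by
      apply Set.eq_univ_of_univ_subset
      calc (Set.univ : Set G) = closure (Γ : Set G) := hΓ.closure_eq.symm
        _ ⊆ closure (Prod.fst '' Rset) := closure_mono hsub
        _ = _ := hPcl.closure_eq
    intro g
    obtain ⟨p, hp, hfst⟩ : g ∈ Prod.fst '' Rset := huniv ▸ Set.mem_univ g
    exact ⟨p.2, by rw [← hfst]; exact hp⟩
  choose ρf hρf using hex
  have hmap_mul : ∀ a b : G, ρf (a * b) = ρf a * ρf b := fun a b =>
    huniq (hρf (a * b)) (hmulmem (hρf a) (hρf b))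
  have hmap_one : ρf 1 = 1 := huniq (hρf 1) hone
  have hext : ∀ γ : Γ, ρf (γ : G) = ((ρ γ : Λ) : K) := fun γ =>
    huniq (hρf (γ : G)) (hΓmem γ)
  -- continuity via the closed graph
  have hgraph : Rset = {p : G × K | p.2 = ρf p.1} := by
    ext p
    constructor
    · intro hp
      have hp' : (p.1, p.2) ∈ Rset := hp
      exact (huniq (hρf p.1) hp').symm
    · intro hp
      have h := hρf p.1
      have hpe : p = (p.1, ρf p.1) := Prod.ext rfl hp
      rw [hpe]
      exact h
  have hcont : Continuous ρf := by
    rw [continuous_iff_isClosed]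
    intro V hV
    have himg : ρf ⁻¹' V = Prod.fst '' (Rset ∩ (Set.univ ×ˢ V)) := by
      ext g
      constructor
      · intro hg
        exact ⟨(g, ρf g), ⟨hρf g, Set.mem_prod.mpr ⟨trivial, hg⟩⟩, rfl⟩
      · rintro ⟨p, ⟨hp, hpV⟩, rfl⟩
        have : p.2 = ρf p.1 := by rw [hgraph] at hp; exact hp
        have h2 := (Set.mem_prod.mp hpV).2
        rwa [this] at h2
    rw [himg]
    exact (((hRcl.inter (isClosed_univ.prod hV)).isCompact).image continuous_fst).isClosed
  -- surjectivity of ρf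
  have hsurj : Function.Surjective ρf := by
    have hrcl : IsClosed (Set.range ρf) := (isCompact_range hcont).isClosed
    have hsub : (Λ : Set K) ⊆ Set.range ρf := by
      rintro k hk
      refine ⟨((ρ.symm ⟨k, hk⟩ : Γ) : G), ?_⟩
      rw [hext, ρ.apply_symm_apply]
    have : Set.range ρf = Set.univ := by
      apply Set.eq_univ_of_univ_subset
      calc (Set.univ : Set K) = closure (Λ : Set K) := hΛ.closure_eq.symm
        _ ⊆ closure (Set.range ρf) := closure_mono hsub
        _ = _ := hrcl.closure_eq
    intro k
    have hm : k ∈ Set.range ρf := by rw [this]; trivial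
    exact hm
  -- surjectivity of f
  have hfsurj : Function.Surjective f := by
    intro y
    obtain ⟨k₀, hk₀⟩ := QuotientGroup.mk_surjective (f ((1 : G) : G ⧸ H))
    obtain ⟨k, hk⟩ := QuotientGroup.mk_surjective y
    have h1 : (k * k₀⁻¹) • f ((1 : G) : G ⧸ H) ∈ Set.range f :=
      hSinv _ _ ⟨_, rfl⟩
    have h2 : (k * k₀⁻¹) • f ((1 : G) : G ⧸ H) = y := by
      rw [← hk₀, MulAction.Quotient.smul_mk, ← hk]
      congr 1
      show (k * k₀⁻¹) * k₀ = k
      group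
    rw [h2] at h1
    exact h1
  exact ⟨{ toFun := ρf, map_one' := hmap_one, map_mul' := hmap_mul }, hcont, hsurj,
    hext, fun g x => hρf g x, hfsurj⟩
end
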